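/- Let g₀, g₁ : ℝ → ℝ be continuous, strictly positive, Lebesgue-integrable functions with ∫_ℝ g₀ = ∫_ℝ g₁ = 1, and suppose s ↦ g₁(s)/g₀(s) is strictly increasing on ℝ (strict MLRP). Then for every τ ∈ ℝ, ∫_{τ}^{∞} g₁(s) ds > ∫_{τ}^{∞} g₀(s) ds; equivalently, ∫_{−∞}^{τ} g₁(s) ds < ∫_{−∞}^{τ} g₀(s) ds. In particular, every positive threshold rule δ_τ⁺ = 𝟙_{[τ,∞)} satisfies TPR(δ_τ⁺) − FPR(δ_τ⁺) > 0 and every negative threshold rule δ_τ⁻ = 𝟙_{(−∞,τ]} satisfies TPR(δ_τ⁻) − FPR(δ_τ⁻) < 0, where TPR(δ) = ∫ g₁ δ and FPR(δ) = ∫ g₀ δ. -/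

import Mathlib

open MeasureTheory Set

noncomputable section

lemma integral_mul_indicator_eq (g : ℝ → ℝ) (t : Set ℝ) (ht : MeasurableSet t) :
    (∫ s, g s * t.indicator (fun _ => (1 : ℝ)) s) = ∫ s in t, g s := by
  rw [← integral_indicator ht]
  congr 1
  funext s
  by_cases hs : s ∈ t <;> simp [hs]

/-- Under strict MLRP, upper-tail mass of `g₁` strictly exceeds that of `g₀`
(and lower-tail mass is strictly smaller); equivalently, every positive threshold
rule `𝟙_{[τ,∞)}` has `TPR − FPR > 0` and every negative threshold rule `𝟙_{(−∞,τ]}`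
has `TPR − FPR < 0`. -/
theorem mlrp_threshold_rules
    (g₀ g₁ : ℝ → ℝ) (hc₀ : Continuous g₀) (hc₁ : Continuous g₁)
    (hp₀ : ∀ s, 0 < g₀ s) (hp₁ : ∀ s, 0 < g₁ s)
    (hi₀ : Integrable g₀ (volume : Measure ℝ)) (hi₁ : Integrable g₁ (volume : Measure ℝ))
    (hn₀ : ∫ s, g₀ s = 1) (hn₁ : ∫ s, g₁ s = 1)
    (hmlrp : StrictMono fun s => g₁ s / g₀ s) :
    ∀ τ : ℝ,
      (∫ s in Ici τ, g₀ s) < (∫ s in Ici τ, g₁ s) ∧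
      (∫ s in Iic τ, g₁ s) < (∫ s in Iic τ, g₀ s) ∧
      (0 < (∫ s, g₁ s * (Ici τ).indicator (fun _ => (1 : ℝ)) s)
            - ∫ s, g₀ s * (Ici τ).indicator (fun _ => (1 : ℝ)) s) ∧
      ((∫ s, g₁ s * (Iic τ).indicator (fun _ => (1 : ℝ)) s)
            - (∫ s, g₀ s * (Iic τ).indicator (fun _ => (1 : ℝ)) s) < 0) := by
  intro τ
  set c : ℝ := g₁ τ / g₀ τ with hc
  set f : ℝ → ℝ := fun s => g₁ s - c * g₀ s with hfdef
  have hfi : Integrable f volume := hi₁.sub (hi₀.const_mul c)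
  have hfτ : f τ = 0 := by
    show g₁ τ - c * g₀ τ = 0
    rw [hc, div_mul_cancel₀ _ (hp₀ τ).ne']
    ring
  have hfpos : ∀ s, τ < s → 0 < f s := by
    intro s hs
    have h' : c < g₁ s / g₀ s := hmlrp hs
    have := (lt_div_iff₀ (hp₀ s)).mp h'
    show 0 < g₁ s - c * g₀ s
    linarith
  have hfneg : ∀ s, s < τ → f s < 0 := by
    intro s hs
    have h' : g₁ s / g₀ s < c := hmlrp hs
    have := (div_lt_iff₀ (hp₀ s)).mp h'
    show g₁ s - c * g₀ s < 0
    linarith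
  -- positivity of ∫_{Ici τ} f
  have hA : 0 < ∫ s in Ici τ, f s := by
    rw [setIntegral_pos_iff_support_of_nonneg_ae]
    · refine lt_of_lt_of_le (b := volume (Ioi τ)) ?_ (measure_mono ?_)
      · simp [Real.volume_Ioi]
      · intro s hs
        exact ⟨(hfpos s hs).ne', Set.mem_Ici.mpr (le_of_lt hs)⟩
    · refine (ae_restrict_iff' measurableSet_Ici).mpr (ae_of_all _ ?_)
      intro s hs
      rcases eq_or_lt_of_le (Set.mem_Ici.mp hs) with h | h
      · simp [← h, hfτ]
      · exact le_of_lt (hfpos s h)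
    · exact hfi.integrableOn
  have hB : (∫ s in Iic τ, f s) < 0 := by
    have : 0 < ∫ s in Iic τ, -(f s) := by
      rw [setIntegral_pos_iff_support_of_nonneg_ae]
      · refine lt_of_lt_of_le (b := volume (Iio τ)) ?_ (measure_mono ?_)
        · simp [Real.volume_Iio]
        · intro s hs
          exact ⟨by simpa using (hfneg s hs).ne, Set.mem_Iic.mpr (le_of_lt hs)⟩
      · refine (ae_restrict_iff' measurableSet_Iic).mpr (ae_of_all _ ?_)
        intro s hs
        rcases eq_or_lt_of_le (Set.mem_Iic.mp hs) with h | h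
        · simp [h, hfτ]
        · simpa using le_of_lt (hfneg s h)
      · exact hfi.neg.integrableOn
    rw [integral_neg] at this
    linarith
  -- abbreviations
  have hIci_eq_Ioi : ∀ g : ℝ → ℝ, (∫ s in Ici τ, g s) = ∫ s in Ioi τ, g s := by
    intro g
    exact (setIntegral_congr_set Ioi_ae_eq_Ici).symm
  have hsplit : ∀ g : ℝ → ℝ, Integrable g volume →
      (∫ s in Iic τ, g s) + (∫ s in Ici τ, g s) = ∫ s, g s := by
    intro g hg
    rw [hIci_eq_Ioi g]
    exact intervalIntegral.integral_Iic_add_Ioi hg.integrableOn hg.integrableOn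
  have hA' : (∫ s in Ici τ, f s) = (∫ s in Ici τ, g₁ s) - c * ∫ s in Ici τ, g₀ s := by
    rw [integral_sub hi₁.integrableOn ((hi₀.const_mul c).integrableOn),
      integral_const_mul]
  have hB' : (∫ s in Iic τ, f s) = (∫ s in Iic τ, g₁ s) - c * ∫ s in Iic τ, g₀ s := by
    rw [integral_sub hi₁.integrableOn ((hi₀.const_mul c).integrableOn),
      integral_const_mul]
  have h0 : (∫ s in Iic τ, g₀ s) + (∫ s in Ici τ, g₀ s) = 1 := by
    rw [hsplit g₀ hi₀, hn₀]
  have h1 : (∫ s in Iic τ, g₁ s) + (∫ s in Ici τ, g₁ s) = 1 := by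
    rw [hsplit g₁ hi₁, hn₁]
  have hI0 : 0 ≤ ∫ s in Ici τ, g₀ s :=
    setIntegral_nonneg measurableSet_Ici fun s _ => (hp₀ s).le
  have hJ0 : 0 ≤ ∫ s in Iic τ, g₀ s :=
    setIntegral_nonneg measurableSet_Iic fun s _ => (hp₀ s).le
  have hmain : (∫ s in Ici τ, g₀ s) < ∫ s in Ici τ, g₁ s := by
    rcases le_or_gt 1 c with h | h
    · nlinarith [hA, hA']
    · nlinarith [hB, hB']
  have hmain2 : (∫ s in Iic τ, g₁ s) < ∫ s in Iic τ, g₀ s := by linarith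
  refine ⟨hmain, hmain2, ?_, ?_⟩
  · rw [integral_mul_indicator_eq g₁ _ measurableSet_Ici,
      integral_mul_indicator_eq g₀ _ measurableSet_Ici]
    linarith
  · rw [integral_mul_indicator_eq g₁ _ measurableSet_Iic,
      integral_mul_indicator_eq g₀ _ measurableSet_Iic]
    linarith

end
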